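/- (TM-EOS formula for E.) Let (ρ_L, p_L), (ρ_R, p_R) be pairs of positive reals with ρ_L/p_L ≠ ρ_R/p_R. For K ∈ {L,R} set θ_K = p_K/ρ_K, z₂,K = ρ_K/p_K, h_K = (5/2)θ_K + √(1+(9/4)θ_K²), S_K = −ln ρ_K + (3/2)ln θ_K + (3/2)ln((3/2)θ_K + √(1+(9/4)θ_K²)), and W₁,K = z₂,K h_K − S_K. Write {{a}} = (a_L+a_R)/2 for arithmetic means of quantities derived from z₂, and {{a}}_ln for logarithmic means. Then E := (W₁,R − W₁,L − (ln ρ_R − ln ρ_L))/(z₂,R − z₂,L) = (3/2)/{{z₂}}_ln + {{√(1+9/(4z₂²))}} − ({{3/(2z₂)}}/{{z₂}})·( {{z₂}}·{{3/(2z₂)}}/{{√(1+9/(4z₂²))}} − (3/2)(1 + {{3/(2z₂)}}/{{√(1+9/(4z₂²))}})/{{3/(2z₂)+√(1+9/(4z₂²))}}_ln ), where the last logarithmic mean is taken of the two values 3/(2z₂,K) + √(1+9/(4z₂,K²)). -/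

import Mathlib

set_option maxHeartbeats 1000000

theorem keylem (zL zR qL qR lzL lzR luL luR : ℝ)
    (hzL : 0 < zL) (hzR : 0 < zR) (hzne : zL ≠ zR)
    (hqL : 0 < qL) (hqR : 0 < qR)
    (hqL2 : 4 * zL ^ 2 * qL ^ 2 = 4 * zL ^ 2 + 9)
    (hqR2 : 4 * zR ^ 2 * qR ^ 2 = 4 * zR ^ 2 + 9) :
    ((5 / 2 + zR * qR + (3 / 2) * lzR - (3 / 2) * luR)
        - (5 / 2 + zL * qL + (3 / 2) * lzL - (3 / 2) * luL)) / (zR - zL)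
      = 3 / 2 / ((zR - zL) / (lzR - lzL)) + (qL + qR) / 2
        - (3 / (2 * zL) + 3 / (2 * zR)) / 2 / ((zL + zR) / 2)
          * ((zL + zR) / 2 * ((3 / (2 * zL) + 3 / (2 * zR)) / 2) / ((qL + qR) / 2)
            - 3 / 2 * (1 + (3 / (2 * zL) + 3 / (2 * zR)) / 2 / ((qL + qR) / 2))
              / ((3 / (2 * zR) + qR - (3 / (2 * zL) + qL)) / (luR - luL))) := by
  have h1 : zL ≠ 0 := hzL.ne'
  have h2 : zR ≠ 0 := hzR.ne'
  have h3 : qL + qR ≠ 0 := by positivity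
  have h4 : zL + zR ≠ 0 := by positivity
  have hzd : zR - zL ≠ 0 := sub_ne_zero.mpr (Ne.symm hzne)
  have hA : zR * qR - zL * qL
      = (zR - zL) * ((qL + qR) / 2
        - ((3 / (2 * zL) + 3 / (2 * zR)) / 2) ^ 2 / ((qL + qR) / 2)) := by
    field_simp
    linear_combination (zL^2*(zL+zR)) * hqR2 - (zR^2*(zL+zR)) * hqL2
  have hB : (3 / (2 * zR) + qR) - (3 / (2 * zL) + qL)
      = -(zR - zL) * ((3 / (2 * zL) + 3 / (2 * zR)) / 2 / ((zL + zR) / 2)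
          * (1 + (3 / (2 * zL) + 3 / (2 * zR)) / 2 / ((qL + qR) / 2))) := by
    field_simp
    linear_combination (zL^2*(zL+zR))*hqR2 - (zR^2*(zL+zR))*hqL2
  have e1 : (3:ℝ) / 2 / ((zR - zL) / (lzR - lzL)) = 3 / 2 * (lzR - lzL) / (zR - zL) :=
    div_div_eq_mul_div _ _ _
  have e2 : (qL + qR) / 2
      - (3 / (2 * zL) + 3 / (2 * zR)) / 2 / ((zL + zR) / 2)
        * ((zL + zR) / 2 * ((3 / (2 * zL) + 3 / (2 * zR)) / 2) / ((qL + qR) / 2))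
      = (zR * qR - zL * qL) / (zR - zL) := by
    rw [eq_div_iff hzd, hA]
    field_simp
  have e3 : (3 / (2 * zL) + 3 / (2 * zR)) / 2 / ((zL + zR) / 2)
        * (3 / 2 * (1 + (3 / (2 * zL) + 3 / (2 * zR)) / 2 / ((qL + qR) / 2))
          / ((3 / (2 * zR) + qR - (3 / (2 * zL) + qL)) / (luR - luL)))
      = -(3 / 2 * (luR - luL) / (zR - zL)) := by
    rw [hB]
    have hXpos : (0:ℝ) < (3 / (2 * zL) + 3 / (2 * zR)) / 2 / ((zL + zR) / 2)
        * (1 + (3 / (2 * zL) + 3 / (2 * zR)) / 2 / ((qL + qR) / 2)) := by positivity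
    have hX := hXpos.ne'
    have t1 : 3 / 2 * (1 + (3 / (2 * zL) + 3 / (2 * zR)) / 2 / ((qL + qR) / 2))
          / (-(zR - zL) * ((3 / (2 * zL) + 3 / (2 * zR)) / 2 / ((zL + zR) / 2)
              * (1 + (3 / (2 * zL) + 3 / (2 * zR)) / 2 / ((qL + qR) / 2))) / (luR - luL))
        = 3 / 2 * (1 + (3 / (2 * zL) + 3 / (2 * zR)) / 2 / ((qL + qR) / 2)) * (luR - luL)
          / (-(zR - zL) * ((3 / (2 * zL) + 3 / (2 * zR)) / 2 / ((zL + zR) / 2)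
              * (1 + (3 / (2 * zL) + 3 / (2 * zR)) / 2 / ((qL + qR) / 2)))) :=
      div_div_eq_mul_div _ _ _
    rw [t1]
    rw [show (3 / (2 * zL) + 3 / (2 * zR)) / 2 / ((zL + zR) / 2)
          * (3 / 2 * (1 + (3 / (2 * zL) + 3 / (2 * zR)) / 2 / ((qL + qR) / 2)) * (luR - luL)
            / (-(zR - zL) * ((3 / (2 * zL) + 3 / (2 * zR)) / 2 / ((zL + zR) / 2)
                * (1 + (3 / (2 * zL) + 3 / (2 * zR)) / 2 / ((qL + qR) / 2)))))
        = 3 / 2 * (luR - luL) * ((3 / (2 * zL) + 3 / (2 * zR)) / 2 / ((zL + zR) / 2)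
            * (1 + (3 / (2 * zL) + 3 / (2 * zR)) / 2 / ((qL + qR) / 2)))
          / (-(zR - zL) * ((3 / (2 * zL) + 3 / (2 * zR)) / 2 / ((zL + zR) / 2)
              * (1 + (3 / (2 * zL) + 3 / (2 * zR)) / 2 / ((qL + qR) / 2)))) from by ring]
    rw [mul_div_mul_right _ _ hX, div_neg]
  linear_combination -e1 - e2 - e3

theorem stmt11 (ρL pL ρR pR : ℝ)
    (hρL : 0 < ρL) (hpL : 0 < pL) (hρR : 0 < ρR) (hpR : 0 < pR)
    (hne : ρL / pL ≠ ρR / pR) :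
    let z2L : ℝ := ρL / pL
    let z2R : ℝ := ρR / pR
    let θL : ℝ := pL / ρL
    let θR : ℝ := pR / ρR
    let hL : ℝ := (5 / 2) * θL + Real.sqrt (1 + (9 / 4) * θL ^ 2)
    let hR : ℝ := (5 / 2) * θR + Real.sqrt (1 + (9 / 4) * θR ^ 2)
    let SL : ℝ := -Real.log ρL + (3 / 2) * Real.log θL
      + (3 / 2) * Real.log ((3 / 2) * θL + Real.sqrt (1 + (9 / 4) * θL ^ 2))
    let SR : ℝ := -Real.log ρR + (3 / 2) * Real.log θR
      + (3 / 2) * Real.log ((3 / 2) * θR + Real.sqrt (1 + (9 / 4) * θR ^ 2))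
    let W1L : ℝ := z2L * hL - SL
    let W1R : ℝ := z2R * hR - SR
    let lz2 : ℝ := (z2R - z2L) / (Real.log z2R - Real.log z2L)
    let aSq : ℝ := (Real.sqrt (1 + 9 / (4 * z2L ^ 2)) + Real.sqrt (1 + 9 / (4 * z2R ^ 2))) / 2
    let aInv : ℝ := (3 / (2 * z2L) + 3 / (2 * z2R)) / 2
    let az2 : ℝ := (z2L + z2R) / 2
    let lu : ℝ := ((3 / (2 * z2R) + Real.sqrt (1 + 9 / (4 * z2R ^ 2)))
        - (3 / (2 * z2L) + Real.sqrt (1 + 9 / (4 * z2L ^ 2))))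
      / (Real.log (3 / (2 * z2R) + Real.sqrt (1 + 9 / (4 * z2R ^ 2)))
        - Real.log (3 / (2 * z2L) + Real.sqrt (1 + 9 / (4 * z2L ^ 2))))
    (W1R - W1L - (Real.log ρR - Real.log ρL)) / (z2R - z2L)
      = (3 / 2) / lz2 + aSq
        - (aInv / az2) * (az2 * aInv / aSq - (3 / 2) * (1 + aInv / aSq) / lu) := by
  intro z2L z2R θL θR hL hR SL SR W1L W1R lz2 aSq aInv az2 lu
  unfold W1L W1R lz2 aSq aInv az2 lu hL hR SL SR z2L z2R θL θR
  have hρLne := hρL.ne'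
  have hpLne := hpL.ne'
  have hρRne := hρR.ne'
  have hpRne := hpR.ne'
  have ha : (0:ℝ) < ρL / pL := div_pos hρL hpL
  have hb : (0:ℝ) < ρR / pR := div_pos hρR hpR
  -- rewrite sqrt arguments
  rw [show Real.sqrt (1 + 9 / 4 * (pL / ρL) ^ 2)
        = Real.sqrt (1 + 9 / (4 * (ρL / pL) ^ 2)) from by
      congr 1; field_simp]
  rw [show Real.sqrt (1 + 9 / 4 * (pR / ρR) ^ 2)
        = Real.sqrt (1 + 9 / (4 * (ρR / pR) ^ 2)) from by
      congr 1; field_simp]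
  -- rewrite log θ
  rw [show Real.log (pL / ρL) = -Real.log (ρL / pL) from by
      rw [← Real.log_inv, inv_div]]
  rw [show Real.log (pR / ρR) = -Real.log (ρR / pR) from by
      rw [← Real.log_inv, inv_div]]
  -- rewrite (3/2)θ
  rw [show (3:ℝ) / 2 * (pL / ρL) = 3 / (2 * (ρL / pL)) from by field_simp]
  rw [show (3:ℝ) / 2 * (pR / ρR) = 3 / (2 * (ρR / pR)) from by field_simp]
  have hQL : (0:ℝ) < Real.sqrt (1 + 9 / (4 * (ρL / pL) ^ 2)) :=
    Real.sqrt_pos.mpr (by positivity)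
  have hQR : (0:ℝ) < Real.sqrt (1 + 9 / (4 * (ρR / pR) ^ 2)) :=
    Real.sqrt_pos.mpr (by positivity)
  have hQL2 : Real.sqrt (1 + 9 / (4 * (ρL / pL) ^ 2)) ^ 2 = 1 + 9 / (4 * (ρL / pL) ^ 2) :=
    Real.sq_sqrt (by positivity)
  have hQR2 : Real.sqrt (1 + 9 / (4 * (ρR / pR) ^ 2)) ^ 2 = 1 + 9 / (4 * (ρR / pR) ^ 2) :=
    Real.sq_sqrt (by positivity)
  have hqL2 : 4 * (ρL / pL) ^ 2 * Real.sqrt (1 + 9 / (4 * (ρL / pL) ^ 2)) ^ 2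
      = 4 * (ρL / pL) ^ 2 + 9 := by
    rw [hQL2]; field_simp
  have hqR2 : 4 * (ρR / pR) ^ 2 * Real.sqrt (1 + 9 / (4 * (ρR / pR) ^ 2)) ^ 2
      = 4 * (ρR / pR) ^ 2 + 9 := by
    rw [hQR2]; field_simp
  have K := keylem (ρL / pL) (ρR / pR)
    (Real.sqrt (1 + 9 / (4 * (ρL / pL) ^ 2))) (Real.sqrt (1 + 9 / (4 * (ρR / pR) ^ 2)))
    (Real.log (ρL / pL)) (Real.log (ρR / pR))
    (Real.log (3 / (2 * (ρL / pL)) + Real.sqrt (1 + 9 / (4 * (ρL / pL) ^ 2))))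
    (Real.log (3 / (2 * (ρR / pR)) + Real.sqrt (1 + 9 / (4 * (ρR / pR) ^ 2))))
    ha hb hne hQL hQR hqL2 hqR2
  rw [← K]
  congr 1
  field_simp
  ring
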